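/- arXiv:1606.03803 — 5 statements merged into one kernel-verified Lean document; each statement's English description precedes it below -/
import Mathlib

section
/- Let χ²(n) denote a chi-squared random variable with n degrees of freedom. Then for any y > 0, P(χ²(n)/n - 1 > 2y/n + 2·sqrt(y/n)) ≤ exp(-y). -/
open MeasureTheory ProbabilityTheory Real

lemma gauss_pdf_mul {t : ℝ} (x : ℝ) :
    gaussianPDFReal 0 1 x * Real.exp (t * x ^ 2)
      = (Real.sqrt (2 * π))⁻¹ * Real.exp (-(1/2 - t) * x ^ 2) := by
  rw [gaussianPDFReal, NNReal.coe_one, mul_one, mul_one, sub_zero, mul_assoc, ← Real.exp_add]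
  congr 1
  ring

lemma smul_pdf_eq {t : ℝ} :
    (fun x => (gaussianPDFReal 0 1 x).toNNReal • Real.exp (t * x ^ 2))
      = fun x => (Real.sqrt (2 * π))⁻¹ * Real.exp (-(1/2 - t) * x ^ 2) := by
  funext x
  rw [NNReal.smul_def, smul_eq_mul, Real.coe_toNNReal _ (gaussianPDFReal_nonneg 0 1 x),
    gauss_pdf_mul]

lemma integrable_exp_sq_gauss_aux {t : ℝ} (ht : t < 1/2) :
    Integrable (fun x => Real.exp (t * x ^ 2)) (gaussianReal 0 1) := by
  rw [gaussianReal_of_var_ne_zero 0 one_ne_zero]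
  have hfm : Measurable (fun x => (gaussianPDFReal 0 1 x).toNNReal) :=
    (measurable_gaussianPDFReal 0 1).real_toNNReal
  have hpdf : gaussianPDF 0 1 = fun x => ((gaussianPDFReal 0 1 x).toNNReal : ENNReal) := rfl
  rw [hpdf, integrable_withDensity_iff_integrable_smul hfm, smul_pdf_eq]
  exact (integrable_exp_neg_mul_sq (by linarith)).const_mul _

lemma integral_exp_sq_gauss {t : ℝ} (ht : t < 1/2) :
    ∫ x, Real.exp (t * x ^ 2) ∂(gaussianReal 0 1) = (Real.sqrt (1 - 2*t))⁻¹ := by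
  rw [gaussianReal_of_var_ne_zero 0 one_ne_zero]
  have hfm : Measurable (fun x => (gaussianPDFReal 0 1 x).toNNReal) :=
    (measurable_gaussianPDFReal 0 1).real_toNNReal
  have hpdf : gaussianPDF 0 1 = fun x => ((gaussianPDFReal 0 1 x).toNNReal : ENNReal) := rfl
  rw [hpdf, integral_withDensity_eq_integral_smul hfm, smul_pdf_eq,
    integral_const_mul, integral_gaussian]
  have h1 : (0:ℝ) < 1 - 2*t := by linarith
  have h2 : π / (1/2 - t) = (2*π) * (1 - 2*t)⁻¹ := by
    field_simp
  rw [h2, Real.sqrt_mul (by positivity : (0:ℝ) ≤ 2*π) (1-2*t)⁻¹, Real.sqrt_inv, ← mul_assoc,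
    inv_mul_cancel₀ (by positivity), one_mul]

lemma aesm_exp_sq {t : ℝ} (ν : Measure ℝ) :
    AEStronglyMeasurable (fun x => Real.exp (t * x ^ 2)) ν :=
  (Real.continuous_exp.comp (continuous_const.mul (continuous_pow 2))).aestronglyMeasurable

lemma mgf_sq {Ωs : Type*} [MeasurableSpace Ωs] {μ : Measure Ωs} {X : Ωs → ℝ}
    (hX : Measurable X) (hmap : μ.map X = gaussianReal 0 1) {t : ℝ} (ht : t < 1/2) :
    mgf (fun ω => X ω ^ 2) μ t = (Real.sqrt (1 - 2*t))⁻¹ := by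
  have : mgf (fun ω => X ω ^ 2) μ t = ∫ ω, Real.exp (t * X ω ^ 2) ∂μ := rfl
  rw [this, ← integral_map hX.aemeasurable (aesm_exp_sq _), hmap, integral_exp_sq_gauss ht]

lemma integrable_exp_sq {Ωs : Type*} [MeasurableSpace Ωs] {μ : Measure Ωs} {X : Ωs → ℝ}
    (hX : Measurable X) (hmap : μ.map X = gaussianReal 0 1) {t : ℝ} (ht : t < 1/2) :
    Integrable (fun ω => Real.exp (t * X ω ^ 2)) μ := by
  have h := integrable_exp_sq_gauss_aux ht
  rw [← hmap] at h
  exact (integrable_map_measure (aesm_exp_sq _) hX.aemeasurable).mp h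

lemma log_le_aux {s : ℝ} (hs : 0 ≤ s) :
    Real.log (1 + 2*s) ≤ (2*s + 2*s^2) / (1 + 2*s) := by
  have h1 : (0:ℝ) < 1 + 2*s := by linarith
  have hu : 0 ≤ Real.log (1 + 2*s) := Real.log_nonneg (by linarith)
  have h2 := Real.self_le_sinh_iff.mpr hu
  have hsinh : Real.sinh (Real.log (1 + 2*s)) = (2*s + 2*s^2) / (1 + 2*s) := by
    rw [Real.sinh_eq, Real.exp_neg, Real.exp_log h1]
    field_simp
    ring
  linarith

/-- Chi-squared tail bound: if `χ²(n)` is the sum of squares of `n` i.i.d. standard normals,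
then for any `y > 0`, `P(χ²(n)/n - 1 > 2y/n + 2√(y/n)) ≤ exp (-y)`. -/
theorem stmt_4 {n : ℕ} {Ωs : Type*} [MeasurableSpace Ωs] (μ : Measure Ωs)
    [IsProbabilityMeasure μ]
    (Z : Fin n → Ωs → ℝ) (hmeas : ∀ i, Measurable (Z i))
    (hindep : iIndepFun Z μ)
    (hgauss : ∀ i, Measure.map (Z i) μ = gaussianReal 0 1)
    (y : ℝ) (hy : 0 < y) :
    μ {ω | (∑ i, Z i ω ^ 2) / n - 1 > 2 * y / n + 2 * Real.sqrt (y / n)}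
      ≤ ENNReal.ofReal (Real.exp (-y)) := by
  rcases Nat.eq_zero_or_pos n with hn | hn
  · subst hn
    have hset : {ω : Ωs | (∑ i, Z i ω ^ 2) / ((0:ℕ):ℝ) - 1
        > 2 * y / ((0:ℕ):ℝ) + 2 * Real.sqrt (y / ((0:ℕ):ℝ))} = ∅ := by
      ext ω
      simp [div_zero]
    rw [hset, measure_empty]
    exact zero_le
  · set N : ℝ := (n:ℝ) with hNdef
    have hN : 0 < N := by simp only [hNdef]; exact_mod_cast hn
    set s := Real.sqrt (y / N) with hsdef
    have hs0 : 0 < s := Real.sqrt_pos.mpr (div_pos hy hN)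
    set t := s / (1 + 2*s) with htdef
    have h1s : (0:ℝ) < 1 + 2*s := by linarith
    have ht0 : 0 ≤ t := by positivity
    have ht2 : t < 1/2 := by
      rw [htdef, div_lt_iff₀ h1s]
      linarith
    set X : Fin n → Ωs → ℝ := fun i ω => Z i ω ^ 2 with hXdef
    have hXmeas : ∀ i, Measurable (X i) := fun i => (hmeas i).pow_const 2
    have hXindep : iIndepFun X μ :=
      hindep.comp (fun _ x => x ^ 2) (fun _ => measurable_id.pow_const 2)
    have hint : ∀ i ∈ Finset.univ, Integrable (fun ω => Real.exp (t * X i ω)) μ :=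
      fun i _ => integrable_exp_sq (hmeas i) (hgauss i) ht2
    have hmgf : mgf (∑ i, X i) μ t = ((Real.sqrt (1 - 2*t))⁻¹) ^ n := by
      rw [hXindep.mgf_sum hXmeas Finset.univ]
      have : ∀ i : Fin n, mgf (X i) μ t = (Real.sqrt (1 - 2*t))⁻¹ :=
        fun i => mgf_sq (hmeas i) (hgauss i) ht2
      simp [this]
    have hintsum : Integrable (fun ω => Real.exp (t * (∑ i, X i) ω)) μ :=
      hXindep.integrable_exp_mul_sum hXmeas hint
    set ε := N + 2*y + 2*Real.sqrt (N*y) with hεdef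
    -- key algebraic facts
    have hy_eq : y = N * s^2 := by
      rw [hsdef, Real.sq_sqrt (le_of_lt (div_pos hy hN))]
      field_simp
    have hsqrtNy : Real.sqrt (N*y) = N*s := by
      rw [hy_eq, show N*(N*s^2) = (N*s)^2 by ring, Real.sqrt_sq (by positivity)]
    have hε : ε = N*(1 + 2*s + 2*s^2) := by
      rw [hεdef, hsqrtNy, hy_eq]; ring
    -- inclusion of events
    have hsub : {ω | (∑ i, Z i ω ^ 2) / N - 1 > 2 * y / N + 2 * s}
        ⊆ {ω | ε ≤ (∑ i, X i) ω} := by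
      intro ω hω
      simp only [Set.mem_setOf_eq] at hω ⊢
      have hsum : (∑ i, X i) ω = ∑ i, Z i ω ^ 2 := by
        simp [hXdef]
      rw [hsum]
      have h3 : 2*y/N + 2*s + 1 < (∑ i, Z i ω ^ 2) / N := by linarith
      have h4 := (lt_div_iff₀ hN).mp h3
      have h5 : (2*y/N + 2*s + 1) * N = 2*y + 2*s*N + N := by
        field_simp
      rw [h5] at h4
      rw [hε]
      nlinarith [h4]
    -- Chernoff bound
    have hch := measure_ge_le_exp_mul_mgf (μ := μ) (X := ∑ i, X i) ε ht0 hintsum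
    rw [hmgf] at hch
    -- final exponential bound
    have hbound : Real.exp (-t*ε) * ((Real.sqrt (1 - 2*t))⁻¹) ^ n ≤ Real.exp (-y) := by
      have h12t : 1 - 2*t = (1 + 2*s)⁻¹ := by
        rw [htdef]; field_simp; ring
      have hinv : (Real.sqrt (1 - 2*t))⁻¹ = Real.sqrt (1 + 2*s) := by
        rw [h12t, Real.sqrt_inv, inv_inv]
      set L := Real.log (1 + 2*s) with hLdef
      have hLsqrt : Real.sqrt (1 + 2*s) = Real.exp (L/2) := by
        rw [hLdef, ← Real.log_sqrt (by linarith), Real.exp_log (Real.sqrt_pos.mpr h1s)]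
      rw [hinv, hLsqrt, ← Real.exp_nat_mul, ← Real.exp_add, Real.exp_le_exp]
      have hlog := log_le_aux hs0.le
      have hNL : N * L ≤ N * ((2*s + 2*s^2) / (1 + 2*s)) :=
        mul_le_mul_of_nonneg_left hlog hN.le
      have htε : t*ε - y = N*(s + s^2)/(1 + 2*s) := by
        rw [hε, htdef, hy_eq]
        field_simp
        ring
      have hhalf : N * ((2*s + 2*s^2) / (1 + 2*s)) / 2 = N*(s + s^2)/(1 + 2*s) := by
        field_simp
      have hgoal : -t*ε + N*(L/2) ≤ -y := by nlinarith [hNL, htε, hhalf]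
      rw [← hNdef]
      linarith [hgoal]
    calc μ {ω | (∑ i, Z i ω ^ 2) / N - 1 > 2 * y / N + 2 * s}
        ≤ μ {ω | ε ≤ (∑ i, X i) ω} := measure_mono hsub
      _ ≤ ENNReal.ofReal (Real.exp (-y)) := by
          rw [← ENNReal.ofReal_toReal (measure_ne_top μ _)]
          exact ENNReal.ofReal_le_ofReal (hch.trans hbound)
end

section
/- Let χ²(n) denote a chi-squared random variable with n degrees of freedom. Then for any z > 0, P(sqrt(χ²(n)/n) - 1 > z) ≤ exp(-n z² / 2). -/
open MeasureTheory ProbabilityTheory Real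
open scoped ENNReal NNReal

lemma gauss_density_rw {t : ℝ} :
    (fun x : ℝ => gaussianPDFReal 0 1 x * rexp (t * x ^ 2))
      = fun x : ℝ => (Real.sqrt (2 * π))⁻¹ * rexp (-(1/2 - t) * x ^ 2) := by
  funext x
  simp only [gaussianPDFReal, NNReal.coe_one, mul_one, sub_zero]
  rw [mul_assoc, ← Real.exp_add]
  ring_nf

lemma gauss_exp_sq_integral {t : ℝ} (ht : t < 1/2) :
    ∫ x, rexp (t * x ^ 2) ∂(gaussianReal 0 1) = (Real.sqrt (1 - 2*t))⁻¹ := by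
  have hb : (0:ℝ) < 1/2 - t := by linarith
  rw [gaussianReal_of_var_ne_zero 0 one_ne_zero]
  have hpdf : gaussianPDF 0 1 = fun x => ((fun x => (gaussianPDFReal 0 1 x).toNNReal) x : ℝ≥0∞) := rfl
  rw [hpdf, integral_withDensity_eq_integral_smul
    (measurable_gaussianPDFReal 0 1).real_toNNReal]
  have : (fun x : ℝ => (gaussianPDFReal 0 1 x).toNNReal • rexp (t * x ^ 2))
      = fun x : ℝ => gaussianPDFReal 0 1 x * rexp (t * x ^ 2) := by
    funext x
    rw [NNReal.smul_def, smul_eq_mul, Real.coe_toNNReal _ (gaussianPDFReal_nonneg 0 1 x)]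
  rw [this, gauss_density_rw, integral_const_mul, integral_gaussian]
  have hb2 : (0:ℝ) < 1 - 2*t := by linarith
  have h1 : π / (1/2 - t) = (2*π) * (1 - 2*t)⁻¹ := by
    rw [div_eq_iff hb.ne']
    field_simp
  rw [h1, Real.sqrt_mul (by positivity : (0:ℝ) ≤ 2*π), Real.sqrt_inv,
    Real.sqrt_mul (by norm_num : (0:ℝ) ≤ 2), ← mul_assoc,
    inv_mul_cancel₀ (by positivity : (Real.sqrt 2 * Real.sqrt π : ℝ) ≠ 0), one_mul]

lemma gauss_exp_sq_integrable {t : ℝ} (ht : t < 1/2) :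
    Integrable (fun x => rexp (t * x ^ 2)) (gaussianReal 0 1) := by
  have hb : (0:ℝ) < 1/2 - t := by linarith
  rw [gaussianReal_of_var_ne_zero 0 one_ne_zero,
    integrable_withDensity_iff (measurable_gaussianPDF 0 1)
      (ae_of_all _ fun x => ENNReal.ofReal_lt_top)]
  have : (fun x : ℝ => rexp (t * x ^ 2) * (gaussianPDF 0 1 x).toReal)
      = fun x => (Real.sqrt (2*π))⁻¹ * rexp (-(1/2 - t) * x ^ 2) := by
    funext x
    rw [gaussianPDF, ENNReal.toReal_ofReal (gaussianPDFReal_nonneg 0 1 x), mul_comm]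
    exact congrFun gauss_density_rw x
  rw [this]
  exact (integrable_exp_neg_mul_sq hb).const_mul _

lemma exp_sq_comp_integrable {t : ℝ} (ht : t < 1/2) {Ω : Type*} [MeasurableSpace Ω]
    (μ : Measure Ω) (X : Ω → ℝ) (hX : Measurable X)
    (hg : Measure.map X μ = gaussianReal 0 1) :
    Integrable (fun ω => rexp (t * X ω ^ 2)) μ := by
  have h := (gauss_exp_sq_integrable ht)
  rw [← hg] at h
  exact (integrable_map_measure h.aestronglyMeasurable hX.aemeasurable).mp h

lemma mgf_sq_gauss {t : ℝ} (ht : t < 1/2) {Ω : Type*} [MeasurableSpace Ω]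
    (μ : Measure Ω) (X : Ω → ℝ) (hX : Measurable X)
    (hg : Measure.map X μ = gaussianReal 0 1) :
    mgf (fun ω => X ω ^ 2) μ t = (Real.sqrt (1 - 2*t))⁻¹ := by
  rw [mgf, ← gauss_exp_sq_integral ht, ← hg,
    integral_map hX.aemeasurable]
  exact (((measurable_id.pow_const 2).const_mul t).exp).aestronglyMeasurable

/-- Chi-squared tail bound: if `χ²(n)` is the sum of squares of `n` i.i.d. standard normals,
then for any `z > 0`, `P(√(χ²(n)/n) - 1 > z) ≤ exp (-n z² / 2)`. -/
theorem stmt_5 {n : ℕ} {Ωs : Type*} [MeasurableSpace Ωs] (μ : Measure Ωs)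
    [IsProbabilityMeasure μ]
    (Z : Fin n → Ωs → ℝ) (hmeas : ∀ i, Measurable (Z i))
    (hindep : iIndepFun Z μ)
    (hgauss : ∀ i, Measure.map (Z i) μ = gaussianReal 0 1)
    (z : ℝ) (hz : 0 < z) :
    μ {ω | Real.sqrt ((∑ i, Z i ω ^ 2) / n) - 1 > z}
      ≤ ENNReal.ofReal (Real.exp (-(n : ℝ) * z ^ 2 / 2)) := by
  by_cases hn : n = 0
  · subst hn
    have : {ω : Ωs | Real.sqrt ((∑ i : Fin 0, Z i ω ^ 2) / (0:ℕ)) - 1 > z} = ∅ := by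
      ext ω
      simp only [Finset.univ_eq_empty, Finset.sum_empty, Set.mem_setOf_eq, Set.mem_empty_iff_false,
        iff_false, gt_iff_lt, not_lt]
      norm_num
      linarith
    rw [this]
    simp
  have hn' : 0 < n := Nat.pos_of_ne_zero hn
  set a : ℝ := (1 + z)^2 with ha_def
  have ha1 : 1 < a := by nlinarith
  have ha0 : 0 < a := by positivity
  set t : ℝ := (a - 1)/(2*a) with ht_def
  have ht0 : 0 < t := div_pos (by linarith) (by linarith)
  have ht : t < 1/2 := by
    rw [ht_def, div_lt_div_iff₀ (by linarith) (by norm_num)]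
    linarith
  have hta : t * a = (a - 1)/2 := by
    rw [ht_def]; field_simp
  have h12t : 1 - 2*t = a⁻¹ := by
    rw [ht_def]
    field_simp
    ring
  set X : Fin n → Ωs → ℝ := fun i ω => Z i ω ^ 2 with hX_def
  have hXm : ∀ i, Measurable (X i) := fun i => (hmeas i).pow_const 2
  have hindep2 : iIndepFun X μ :=
    hindep.comp (fun _ x => x ^ 2) (fun _ => measurable_id.pow_const 2)
  have hint : ∀ i, Integrable (fun ω => rexp (t * X i ω)) μ := fun i =>
    exp_sq_comp_integrable ht μ (Z i) (hmeas i) (hgauss i)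
  have hsub : {ω | Real.sqrt ((∑ i, Z i ω ^ 2) / n) - 1 > z}
      ⊆ {ω | (n:ℝ) * a ≤ (∑ i, X i) ω} := by
    intro ω hω
    have h1 : 1 + z < Real.sqrt ((∑ i, Z i ω ^ 2) / n) := by
      have := hω; simp only [Set.mem_setOf_eq, gt_iff_lt] at this; linarith
    have h2 : a < (∑ i, Z i ω ^ 2) / n :=
      (Real.lt_sqrt (by positivity)).mp h1
    have h3 : (0:ℝ) < n := Nat.cast_pos.mpr hn'
    simp only [Set.mem_setOf_eq, Finset.sum_apply]
    rw [lt_div_iff₀ h3] at h2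
    nlinarith
  have hintS : Integrable (fun ω => rexp (t * (∑ i, X i) ω)) μ :=
    hindep2.integrable_exp_mul_sum hXm (fun i _ => hint i)
  have hmgf : mgf (∑ i, X i) μ t = (Real.sqrt a) ^ n := by
    rw [hindep2.mgf_sum hXm]
    have : ∀ i : Fin n, mgf (X i) μ t = Real.sqrt a := by
      intro i
      rw [mgf_sq_gauss ht μ (Z i) (hmeas i) (hgauss i), h12t, Real.sqrt_inv, inv_inv]
    simp [this, Finset.prod_const]
  have hchern := measure_ge_le_exp_mul_mgf (μ := μ) (X := ∑ i, X i)
    ((n:ℝ) * a) ht0.le hintS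
  rw [hmgf] at hchern
  have hend : rexp (-t * ((n:ℝ) * a)) * Real.sqrt a ^ n ≤ rexp (-(n:ℝ) * z^2 / 2) := by
    have hsq : Real.sqrt a ^ n = rexp ((n:ℝ) * (Real.log a / 2)) := by
      rw [← Real.log_sqrt ha0.le, Real.exp_nat_mul, Real.exp_log (Real.sqrt_pos.mpr ha0)]
    rw [hsq, ← Real.exp_add, Real.exp_le_exp]
    have hlog : Real.log a ≤ a - 1 - z^2 := by
      have h1 : Real.log (1+z) ≤ (1+z) - 1 := Real.log_le_sub_one_of_pos (by linarith)
      have h2 : Real.log a = 2 * Real.log (1+z) := by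
        rw [ha_def, Real.log_pow]; push_cast; ring
      rw [h2, ha_def]; nlinarith
    have hn0 : (0:ℝ) ≤ n := Nat.cast_nonneg n
    have : -t * ((n:ℝ) * a) = -(n:ℝ) * ((a-1)/2) := by
      rw [show -t * ((n:ℝ) * a) = -(n:ℝ) * (t * a) by ring, hta]
    rw [this]
    nlinarith
  calc μ {ω | Real.sqrt ((∑ i, Z i ω ^ 2) / n) - 1 > z}
      ≤ μ {ω | (n:ℝ) * a ≤ (∑ i, X i) ω} := measure_mono hsub
    _ = ENNReal.ofReal ((μ {ω | (n:ℝ) * a ≤ (∑ i, X i) ω}).toReal) :=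
        (ENNReal.ofReal_toReal (measure_ne_top μ _)).symm
    _ ≤ ENNReal.ofReal (rexp (-(n:ℝ) * z^2 / 2)) :=
        ENNReal.ofReal_le_ofReal (hchern.trans hend)
end

section
/- Let g_0, g_1, g_2 be the densities of p-dimensional centered Gaussian distributions N(0, Σ_0), N(0, Σ_1), N(0, Σ_2) with Σ_0, Σ_1, Σ_2 positive definite, and suppose the matrix I - Σ_0^{-1}(Σ_1 - Σ_0)Σ_0^{-1}(Σ_2 - Σ_0) is positive definite. Then ∫ g_1(x) g_2(x) / g_0(x) dx = [det(I - Σ_0^{-1}(Σ_1 - Σ_0)Σ_0^{-1}(Σ_2 - Σ_0))]^{-1/2}. -/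
open MeasureTheory

section helpers
open Matrix Real

variable {n : Type*} [Fintype n] [DecidableEq n]

lemma herm_smul {M : Matrix n n ℝ} (hM : M.IsHermitian) (c : ℝ) : (c • M).IsHermitian := by
  have := hM.eq
  simp only [Matrix.IsHermitian, Matrix.conjTranspose_smul, star_trivial]
  rw [this]

lemma pd_smul {M : Matrix n n ℝ} (hM : M.PosDef) {c : ℝ} (hc : 0 < c) : (c • M).PosDef := by
  refine Matrix.PosDef.of_dotProduct_mulVec_pos (herm_smul hM.1 c) fun x hx => ?_
  rw [smul_mulVec, dotProduct_smul, smul_eq_mul]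
  exact mul_pos hc (by simpa using hM.dotProduct_mulVec_pos hx)

lemma psd_smul {M : Matrix n n ℝ} (hM : M.PosSemidef) {c : ℝ} (hc : 0 ≤ c) : (c • M).PosSemidef := by
  refine Matrix.PosSemidef.of_dotProduct_mulVec_nonneg (herm_smul hM.1 c) fun x => ?_
  rw [smul_mulVec, dotProduct_smul, smul_eq_mul]
  exact mul_nonneg hc (by simpa using hM.dotProduct_mulVec_nonneg x)

lemma psd_det_pd {M : Matrix n n ℝ} (h : M.PosSemidef) (hd : M.det ≠ 0) : M.PosDef := by
  refine Matrix.PosDef.of_dotProduct_mulVec_pos h.1 fun x hx => ?_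
  rcases lt_or_eq_of_le (by simpa using h.dotProduct_mulVec_nonneg x) with h' | h'
  · simpa using h'
  · exfalso
    have h0 : M *ᵥ x = 0 := (h.dotProduct_mulVec_zero_iff x).mp (by simpa using h'.symm)
    have hinj : Function.Injective (M.mulVec) :=
      Matrix.mulVec_injective_iff_isUnit.mpr ((Matrix.isUnit_iff_isUnit_det M).mpr hd.isUnit)
    exact hx (by simpa using hinj (h0.trans (M.mulVec_zero).symm))

theorem keyId (Z X Y : Matrix n n ℝ) (hZ : IsUnit Z.det) (hX : IsUnit X.det) (hY : IsUnit Y.det) :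
    1 - Z⁻¹ * (X - Z) * Z⁻¹ * (Y - Z) = Z⁻¹ * X * (X⁻¹ + Y⁻¹ - Z⁻¹) * Y := by
  have e1 : Z⁻¹ * X * (X⁻¹ + Y⁻¹ - Z⁻¹) * Y
      = Z⁻¹ * Y + Z⁻¹ * X - Z⁻¹ * X * Z⁻¹ * Y := by
    rw [mul_sub, mul_add, sub_mul, add_mul, Matrix.mul_assoc Z⁻¹ X X⁻¹,
      Matrix.mul_nonsing_inv _ hX, Matrix.mul_one,
      Matrix.mul_assoc (Z⁻¹ * X) Y⁻¹ Y, Matrix.nonsing_inv_mul _ hY, Matrix.mul_one,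
      Matrix.mul_assoc Z⁻¹ X Z⁻¹]
  have e2 : Z⁻¹ * (X - Z) * Z⁻¹ * (Y - Z)
      = Z⁻¹ * X * Z⁻¹ * Y - Z⁻¹ * X - Z⁻¹ * Y + 1 := by
    rw [mul_sub (Z⁻¹ * (X - Z) * Z⁻¹), Matrix.nonsing_inv_mul_cancel_right _ _ hZ,
      mul_sub Z⁻¹ X Z, Matrix.nonsing_inv_mul _ hZ, sub_mul, sub_mul, one_mul]
    noncomm_ring
  rw [e1, e2]; noncomm_ring

lemma quad_bound {p : ℕ} (D : Matrix (Fin p) (Fin p) ℝ) (w : Fin p → ℝ) (hw : ‖w‖ ≤ 1) :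
    |w ⬝ᵥ D *ᵥ w| ≤ ∑ i, ∑ j, |D i j| := by
  have hwi : ∀ i, |w i| ≤ 1 := fun i => le_trans (norm_le_pi_norm w i) hw
  calc |w ⬝ᵥ D *ᵥ w| = |∑ i, w i * ∑ j, D i j * w j| := by
        simp [dotProduct, Matrix.mulVec]
    _ ≤ ∑ i, |w i * ∑ j, D i j * w j| := Finset.abs_sum_le_sum_abs _ _
    _ ≤ ∑ i, ∑ j, |D i j| := by
        apply Finset.sum_le_sum
        intro i _
        rw [abs_mul]
        calc |w i| * |∑ j, D i j * w j| ≤ 1 * ∑ j, |D i j * w j| := by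
              apply mul_le_mul (hwi i) (Finset.abs_sum_le_sum_abs _ _) (abs_nonneg _) zero_le_one
          _ = ∑ j, |D i j| * |w j| := by rw [one_mul]; exact Finset.sum_congr rfl fun j _ => abs_mul _ _
          _ ≤ ∑ j, |D i j| * 1 := Finset.sum_le_sum fun j _ => mul_le_mul_of_nonneg_left (hwi j) (abs_nonneg _)
          _ = ∑ j, |D i j| := by simp

theorem Apd {p : ℕ} {S0 S1 S2 : Matrix (Fin p) (Fin p) ℝ}
    (h0 : S0.PosDef) (h1 : S1.PosDef) (h2 : S2.PosDef)
    (hM : (1 - S0⁻¹ * (S1 - S0) * S0⁻¹ * (S2 - S0)).PosDef) :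
    (S1⁻¹ + S2⁻¹ - S0⁻¹).PosDef := by
  -- path of matrices
  set T1 : ℝ → Matrix (Fin p) (Fin p) ℝ := fun t => (1 - t) • S1 + t • S0 with hT1def
  set T2 : ℝ → Matrix (Fin p) (Fin p) ℝ := fun t => (1 - t) • S2 + t • S0 with hT2def
  set F : ℝ → Matrix (Fin p) (Fin p) ℝ := fun t => (T1 t)⁻¹ + (T2 t)⁻¹ - S0⁻¹ with hFdef
  have hpath : ∀ (S : Matrix (Fin p) (Fin p) ℝ), S.PosDef → ∀ t ∈ Set.Icc (0:ℝ) 1,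
      ((1 - t) • S + t • S0).PosDef := by
    intro S hS t ht
    rcases eq_or_lt_of_le ht.2 with h | h
    · subst h; simpa using h0
    · exact Matrix.PosDef.add_posSemidef (pd_smul hS (by linarith)) (psd_smul h0.posSemidef ht.1)
  have hT1 : ∀ t ∈ Set.Icc (0:ℝ) 1, (T1 t).PosDef := fun t ht => hpath S1 h1 t ht
  have hT2 : ∀ t ∈ Set.Icc (0:ℝ) 1, (T2 t).PosDef := fun t ht => hpath S2 h2 t ht
  -- M(t) positive definite
  have hMt : ∀ t ∈ Set.Icc (0:ℝ) 1,
      (1 - S0⁻¹ * (T1 t - S0) * S0⁻¹ * (T2 t - S0)).PosDef := by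
    intro t ht
    have e1 : T1 t - S0 = (1 - t) • (S1 - S0) := by
      rw [hT1def]; simp only [smul_sub, sub_smul, one_smul]; abel
    have e2 : T2 t - S0 = (1 - t) • (S2 - S0) := by
      rw [hT2def]; simp only [smul_sub, sub_smul, one_smul]; abel
    have e3 : S0⁻¹ * (T1 t - S0) * S0⁻¹ * (T2 t - S0)
        = ((1 - t) ^ 2) • (S0⁻¹ * (S1 - S0) * S0⁻¹ * (S2 - S0)) := by
      rw [e1, e2]
      simp only [Matrix.mul_smul, Matrix.smul_mul, smul_smul]
      congr 1
      ring
    rw [e3]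
    set c : ℝ := (1 - t) ^ 2 with hc
    have hc0 : 0 ≤ c := sq_nonneg _
    have hc1 : c ≤ 1 := by
      rw [hc]
      nlinarith [ht.1, ht.2]
    have e4 : 1 - c • (S0⁻¹ * (S1 - S0) * S0⁻¹ * (S2 - S0))
        = (1 - c) • (1 : Matrix (Fin p) (Fin p) ℝ)
          + c • (1 - S0⁻¹ * (S1 - S0) * S0⁻¹ * (S2 - S0)) := by
      rw [smul_sub, sub_smul, one_smul]; abel
    rw [e4]
    rcases eq_or_lt_of_le hc0 with h | h
    · rw [← h]; simpa using Matrix.PosDef.one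
    · exact Matrix.PosDef.posSemidef_add (psd_smul Matrix.PosSemidef.one (by linarith)) (pd_smul hM h)
  -- determinant of F t nonzero on [0,1]
  have hdF : ∀ t ∈ Set.Icc (0:ℝ) 1, (F t).det ≠ 0 := by
    intro t ht
    have hu0 : IsUnit S0.det := h0.det_pos.ne'.isUnit
    have hu1 : IsUnit (T1 t).det := (hT1 t ht).det_pos.ne'.isUnit
    have hu2 : IsUnit (T2 t).det := (hT2 t ht).det_pos.ne'.isUnit
    have hkey := keyId S0 (T1 t) (T2 t) hu0 hu1 hu2
    have hdetM : (0:ℝ) < (1 - S0⁻¹ * (T1 t - S0) * S0⁻¹ * (T2 t - S0)).det := (hMt t ht).det_pos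
    rw [hkey] at hdetM
    intro hF0
    rw [show (T1 t)⁻¹ + (T2 t)⁻¹ - S0⁻¹ = F t from rfl] at hdetM
    rw [Matrix.det_mul, Matrix.det_mul, Matrix.det_mul, hF0] at hdetM
    simp at hdetM
  -- hermitian
  have hherm : ∀ t ∈ Set.Icc (0:ℝ) 1, (F t).IsHermitian := fun t ht =>
    (((hT1 t ht).inv.isHermitian.add (hT2 t ht).inv.isHermitian).sub h0.inv.isHermitian)
  -- continuity of F on [0,1]
  have hT1c : Continuous T1 := by
    exact ((continuous_const.sub continuous_id).smul continuous_const).add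
      (continuous_id.smul continuous_const)
  have hT2c : Continuous T2 := by
    exact ((continuous_const.sub continuous_id).smul continuous_const).add
      (continuous_id.smul continuous_const)
  have hinvc : ∀ (T : ℝ → Matrix (Fin p) (Fin p) ℝ), Continuous T →
      (∀ t ∈ Set.Icc (0:ℝ) 1, (T t).det ≠ 0) →
      ContinuousOn (fun t => (T t)⁻¹) (Set.Icc (0:ℝ) 1) := by
    intro T hTc hTd
    have : ∀ t, (T t)⁻¹ = ((T t).det)⁻¹ • (T t).adjugate := by
      intro t; rw [Matrix.inv_def, Ring.inverse_eq_inv']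
    simp only [this]
    exact (hTc.matrix_det.continuousOn.inv₀ hTd).smul hTc.matrix_adjugate.continuousOn
  have hFc : ContinuousOn F (Set.Icc (0:ℝ) 1) := by
    exact ((hinvc T1 hT1c (fun t ht => (hT1 t ht).det_pos.ne')).add
      (hinvc T2 hT2c (fun t ht => (hT2 t ht).det_pos.ne'))).sub continuousOn_const
  -- trivial case
  rcases isEmpty_or_nonempty (Fin p) with hp | hp
  · refine Matrix.PosDef.of_dotProduct_mulVec_pos ((h1.inv.isHermitian.add h2.inv.isHermitian).sub h0.inv.isHermitian) fun x hx => ?_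
    exact absurd (funext fun i => (IsEmpty.false i).elim) hx
  -- clopen argument
  haveI : PreconnectedSpace (Set.Icc (0:ℝ) 1) := Subtype.preconnectedSpace isPreconnected_Icc
  have hGc : Continuous (fun τ : Set.Icc (0:ℝ) 1 => F ↑τ) := hFc.restrict
  have hentry : ∀ i j, Continuous fun τ : Set.Icc (0:ℝ) 1 => F ↑τ i j := fun i j =>
    (continuous_apply j).comp ((continuous_apply i).comp hGc)
  set C : Set (Set.Icc (0:ℝ) 1) := {τ | (F ↑τ).PosSemidef} with hCdef
  have hqc : ∀ v : Fin p → ℝ, Continuous fun τ : Set.Icc (0:ℝ) 1 => v ⬝ᵥ F ↑τ *ᵥ v := fun v =>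
    continuous_const.dotProduct (hGc.matrix_mulVec continuous_const)
  have hCclosed : IsClosed C := by
    have : C = ⋂ v : Fin p → ℝ, {τ : Set.Icc (0:ℝ) 1 | 0 ≤ v ⬝ᵥ F ↑τ *ᵥ v} := by
      ext τ
      simp only [hCdef, Set.mem_setOf_eq, Set.mem_iInter]
      constructor
      · intro h v; simpa using h.dotProduct_mulVec_nonneg v
      · intro h; exact Matrix.PosSemidef.of_dotProduct_mulVec_nonneg (hherm ↑τ τ.2) fun v => by simpa using h v
    rw [this]
    exact isClosed_iInter fun v => isClosed_le continuous_const (hqc v)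
  have hCopen : IsOpen C := by
    rw [isOpen_iff_mem_nhds]
    intro t0 ht0
    have pd0 : (F ↑t0).PosDef := psd_det_pd ht0 (hdF ↑t0 t0.2)
    obtain ⟨v0, hv0mem, hminOn⟩ := (isCompact_sphere (0 : Fin p → ℝ) 1).exists_isMinOn
      (NormedSpace.sphere_nonempty.mpr zero_le_one)
      ((continuous_id.dotProduct (continuous_const.matrix_mulVec continuous_id))).continuousOn
    have hmin : ∀ v ∈ Metric.sphere (0 : Fin p → ℝ) 1,
        v0 ⬝ᵥ F ↑t0 *ᵥ v0 ≤ v ⬝ᵥ F ↑t0 *ᵥ v := fun v hv => hminOn hv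
    have hv0n : ‖v0‖ = 1 := mem_sphere_zero_iff_norm.mp hv0mem
    have hv0 : v0 ≠ 0 := by intro h; rw [h] at hv0n; simp at hv0n
    set m : ℝ := v0 ⬝ᵥ F ↑t0 *ᵥ v0 with hmdef
    have hm : 0 < m := by simpa using pd0.dotProduct_mulVec_pos hv0
    set δ : Set.Icc (0:ℝ) 1 → ℝ := fun τ => ∑ i, ∑ j, |F ↑τ i j - F ↑t0 i j| with hδdef
    have hδc : Continuous δ := continuous_finset_sum _ fun i _ =>
      continuous_finset_sum _ fun j _ => ((hentry i j).sub continuous_const).abs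
    have hδ0 : δ t0 = 0 := by simp [hδdef]
    have hUopen : IsOpen (δ ⁻¹' Set.Iio m) := hδc.isOpen_preimage _ isOpen_Iio
    have ht0U : t0 ∈ δ ⁻¹' Set.Iio m := by simp [Set.mem_preimage, hδ0, hm]
    refine mem_nhds_iff.mpr ⟨δ ⁻¹' Set.Iio m, ?_, hUopen, ht0U⟩
    intro τ hτ
    refine Matrix.PosSemidef.of_dotProduct_mulVec_nonneg (hherm ↑τ τ.2) fun x => ?_
    rw [star_trivial]
    by_cases hx : x = 0
    · simp [hx]
    · have hnx : ‖x‖ ≠ 0 := norm_ne_zero_iff.mpr hx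
      set w : Fin p → ℝ := ‖x‖⁻¹ • x with hwdef
      have hwn : ‖w‖ = 1 := by
        rw [hwdef, norm_smul, norm_inv, norm_norm, inv_mul_cancel₀ hnx]
      have hxw : x = ‖x‖ • w := (smul_inv_smul₀ hnx x).symm
      have hbound : |w ⬝ᵥ (F ↑τ - F ↑t0) *ᵥ w| ≤ δ τ := by
        have := quad_bound (F ↑τ - F ↑t0) w (le_of_eq hwn)
        simpa [hδdef, Matrix.sub_apply] using this
      have hlow : m ≤ w ⬝ᵥ F ↑t0 *ᵥ w := hmin w (mem_sphere_zero_iff_norm.mpr hwn)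
      have hsplit : w ⬝ᵥ F ↑τ *ᵥ w
          = w ⬝ᵥ F ↑t0 *ᵥ w + w ⬝ᵥ (F ↑τ - F ↑t0) *ᵥ w := by
        rw [show F ↑τ = F ↑t0 + (F ↑τ - F ↑t0) by abel, Matrix.add_mulVec, dotProduct_add]
        abel
      have hwpos : 0 ≤ w ⬝ᵥ F ↑τ *ᵥ w := by
        have hδτ : δ τ < m := hτ
        have h1' := abs_le.mp hbound
        rw [hsplit]
        linarith [h1'.1]
      rw [hxw, smul_dotProduct, Matrix.mulVec_smul, dotProduct_smul, smul_eq_mul, smul_eq_mul,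
        ← mul_assoc]
      exact mul_nonneg (mul_nonneg (norm_nonneg x) (norm_nonneg x)) hwpos
  have hone : (⟨1, by norm_num⟩ : Set.Icc (0:ℝ) 1) ∈ C := by
    have hF1 : F 1 = S0⁻¹ + S0⁻¹ - S0⁻¹ := by
      simp [hFdef, hT1def, hT2def]
    have : F 1 = S0⁻¹ := by rw [hF1]; abel
    simp only [hCdef, Set.mem_setOf_eq]
    rw [this]
    exact h0.inv.posSemidef
  have hCuniv : C = Set.univ := (IsClopen.eq_univ ⟨hCclosed, hCopen⟩) ⟨_, hone⟩
  have hzero : (⟨0, by norm_num⟩ : Set.Icc (0:ℝ) 1) ∈ C := hCuniv ▸ Set.mem_univ _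
  have hF0 : F 0 = S1⁻¹ + S2⁻¹ - S0⁻¹ := by
    simp [hFdef, hT1def, hT2def]
  have hpsd : (S1⁻¹ + S2⁻¹ - S0⁻¹).PosSemidef := by
    have := hzero
    simp only [hCdef, Set.mem_setOf_eq] at this
    rwa [hF0] at this
  have hd0 : (S1⁻¹ + S2⁻¹ - S0⁻¹).det ≠ 0 := by
    have := hdF 0 (by norm_num)
    rwa [hF0] at this
  exact psd_det_pd hpsd hd0


lemma gaussInt {p : ℕ} {A : Matrix (Fin p) (Fin p) ℝ} (hA : A.PosDef) :
    ∫ x : Fin p → ℝ, Real.exp (-(x ⬝ᵥ A *ᵥ x) / 2)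
      = Real.sqrt (2 * π) ^ p / Real.sqrt A.det := by
  obtain ⟨B, hB⟩ : ∃ B : Matrix (Fin p) (Fin p) ℝ, A = Bᴴ * B := by
    open scoped MatrixOrder in
    exact CStarAlgebra.nonneg_iff_eq_star_mul_self.mp hA.posSemidef.nonneg
  have hdet : A.det = B.det ^ 2 := by
    rw [hB, Matrix.det_mul, Matrix.det_conjTranspose, sq]; simp
  have hdetA : (0:ℝ) < A.det := hA.det_pos
  have hdetB : B.det ≠ 0 := by
    intro h; rw [hdet, h] at hdetA; simp at hdetA
  have hq : ∀ x : Fin p → ℝ, x ⬝ᵥ A *ᵥ x = ∑ i, (B *ᵥ x) i ^ 2 := by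
    intro x
    rw [hB, ← Matrix.mulVec_mulVec, Matrix.dotProduct_mulVec]
    have hBt : (Bᴴ : Matrix (Fin p) (Fin p) ℝ) = Bᵀ := by
      ext i j; simp [Matrix.conjTranspose_apply]
    rw [hBt, Matrix.vecMul_transpose]
    simp [dotProduct, sq]
  set g : (Fin p → ℝ) → ℝ := fun y => Real.exp (-(∑ i, y i ^ 2) / 2) with hg
  have hgc : Continuous g := by
    apply Real.continuous_exp.comp
    exact (continuous_finset_sum _ (fun i _ => (continuous_apply i).pow 2)).neg.div_const 2
  have hmap := Real.map_matrix_volume_pi_eq_smul_volume_pi (M := B) hdetB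
  have hφc : Continuous (Matrix.toLin' B) := LinearMap.continuous_of_finiteDimensional _
  have step1 : ∫ x : Fin p → ℝ, Real.exp (-(x ⬝ᵥ A *ᵥ x) / 2) = ∫ x, g (Matrix.toLin' B x) := by
    congr 1 with x
    simp only [hg, hq x, Matrix.toLin'_apply]
  have step2 : ∫ x, g (Matrix.toLin' B x) = |B.det|⁻¹ * ∫ y, g y := by
    rw [← integral_map hφc.aemeasurable (hgc.aestronglyMeasurable), hmap,
      integral_smul_measure, ENNReal.toReal_ofReal (by positivity), smul_eq_mul, abs_inv]
  have harg : ∀ y : Fin p → ℝ, -(∑ i, y i ^ 2) / 2 = ∑ i, -(1/2) * y i ^ 2 := by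
    intro y
    rw [neg_div, Finset.sum_div, ← Finset.sum_neg_distrib]
    exact Finset.sum_congr rfl fun i _ => by ring
  have step3 : ∫ y : Fin p → ℝ, g y = Real.sqrt (2 * π) ^ p := by
    calc ∫ y : Fin p → ℝ, g y = ∫ y : Fin p → ℝ, ∏ i, Real.exp (-(1/2) * y i ^ 2) := by
          congr 1 with y
          rw [hg]
          simp only []
          rw [harg y, Real.exp_sum]
      _ = (∫ t : ℝ, Real.exp (-(1/2) * t ^ 2)) ^ p := by
          rw [MeasureTheory.volume_pi, MeasureTheory.integral_fintype_prod_eq_pow (ι := Fin p)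
            (fun t : ℝ => Real.exp (-(1/2) * t ^ 2)), Fintype.card_fin]
      _ = Real.sqrt (2 * π) ^ p := by
          rw [integral_gaussian, show π / (1/2 : ℝ) = 2 * π by ring]
  rw [step1, step2, step3, show |B.det| = Real.sqrt A.det by rw [hdet, Real.sqrt_sq_eq_abs]]
  ring

end helpers

open Matrix Real in
/-- For centered Gaussian densities `g_i` with positive definite covariances `S_i`, if
`I - S₀⁻¹(S₁-S₀)S₀⁻¹(S₂-S₀)` is positive definite, then
`∫ g₁ g₂ / g₀ = det(I - S₀⁻¹(S₁-S₀)S₀⁻¹(S₂-S₀))^{-1/2}`. -/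

theorem stmt_7 {p : ℕ} (S0 S1 S2 : Matrix (Fin p) (Fin p) ℝ)
    (h0 : S0.PosDef) (h1 : S1.PosDef) (h2 : S2.PosDef)
    (hM : (1 - S0⁻¹ * (S1 - S0) * S0⁻¹ * (S2 - S0)).PosDef) :
    (∫ x : Fin p → ℝ,
        ((2 * Real.pi) ^ (-(p : ℝ) / 2) * S1.det ^ (-(1 : ℝ) / 2) *
            Real.exp (-(dotProduct x (S1⁻¹.mulVec x)) / 2)) *
          ((2 * Real.pi) ^ (-(p : ℝ) / 2) * S2.det ^ (-(1 : ℝ) / 2) *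
            Real.exp (-(dotProduct x (S2⁻¹.mulVec x)) / 2)) /
          ((2 * Real.pi) ^ (-(p : ℝ) / 2) * S0.det ^ (-(1 : ℝ) / 2) *
            Real.exp (-(dotProduct x (S0⁻¹.mulVec x)) / 2)))
      = (1 - S0⁻¹ * (S1 - S0) * S0⁻¹ * (S2 - S0)).det ^ (-(1 : ℝ) / 2) := by
  have hA : (S1⁻¹ + S2⁻¹ - S0⁻¹).PosDef := Apd h0 h1 h2 hM
  set A : Matrix (Fin p) (Fin p) ℝ := S1⁻¹ + S2⁻¹ - S0⁻¹ with hAdef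
  have h2π : (0:ℝ) < 2 * π := by positivity
  have hd0 : (0:ℝ) < S0.det := h0.det_pos
  have hd1 : (0:ℝ) < S1.det := h1.det_pos
  have hd2 : (0:ℝ) < S2.det := h2.det_pos
  have hdA : (0:ℝ) < A.det := hA.det_pos
  set C : ℝ := (2 * π) ^ (-(p : ℝ) / 2) * S1.det ^ (-(1:ℝ)/2) *
      ((2 * π) ^ (-(p : ℝ) / 2) * S2.det ^ (-(1:ℝ)/2)) /
      ((2 * π) ^ (-(p : ℝ) / 2) * S0.det ^ (-(1:ℝ)/2)) with hCdef
  have hq : ∀ x : Fin p → ℝ, x ⬝ᵥ A *ᵥ x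
      = x ⬝ᵥ S1⁻¹ *ᵥ x + x ⬝ᵥ S2⁻¹ *ᵥ x - x ⬝ᵥ S0⁻¹ *ᵥ x := by
    intro x
    rw [hAdef, Matrix.sub_mulVec, Matrix.add_mulVec, dotProduct_sub, dotProduct_add]
  have hpoint : ∀ x : Fin p → ℝ,
      ((2 * Real.pi) ^ (-(p : ℝ) / 2) * S1.det ^ (-(1 : ℝ) / 2) *
            Real.exp (-(dotProduct x (S1⁻¹.mulVec x)) / 2)) *
          ((2 * Real.pi) ^ (-(p : ℝ) / 2) * S2.det ^ (-(1 : ℝ) / 2) *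
            Real.exp (-(dotProduct x (S2⁻¹.mulVec x)) / 2)) /
          ((2 * Real.pi) ^ (-(p : ℝ) / 2) * S0.det ^ (-(1 : ℝ) / 2) *
            Real.exp (-(dotProduct x (S0⁻¹.mulVec x)) / 2))
        = C * Real.exp (-(x ⬝ᵥ A *ᵥ x) / 2) := by
    intro x
    have he : Real.exp (-(x ⬝ᵥ A *ᵥ x) / 2)
        = Real.exp (-(x ⬝ᵥ S1⁻¹ *ᵥ x) / 2) * Real.exp (-(x ⬝ᵥ S2⁻¹ *ᵥ x) / 2)
          / Real.exp (-(x ⬝ᵥ S0⁻¹ *ᵥ x) / 2) := by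
      rw [← Real.exp_add, ← Real.exp_sub]
      congr 1
      rw [hq x]
      ring
    rw [he, hCdef]
    have e0 : Real.exp (-(x ⬝ᵥ S0⁻¹ *ᵥ x) / 2) ≠ 0 := Real.exp_ne_zero _
    have c2π : (0:ℝ) < (2 * π) ^ (-(p : ℝ) / 2) := Real.rpow_pos_of_pos h2π _
    have c0 : (0:ℝ) < S0.det ^ (-(1:ℝ)/2) := Real.rpow_pos_of_pos hd0 _
    show ((2 * π) ^ (-(p : ℝ) / 2) * S1.det ^ (-(1:ℝ)/2) * Real.exp (-(x ⬝ᵥ S1⁻¹ *ᵥ x) / 2)) * _ / _ = _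
    field_simp
  have hstep : (∫ x : Fin p → ℝ,
      ((2 * Real.pi) ^ (-(p : ℝ) / 2) * S1.det ^ (-(1 : ℝ) / 2) *
            Real.exp (-(dotProduct x (S1⁻¹.mulVec x)) / 2)) *
          ((2 * Real.pi) ^ (-(p : ℝ) / 2) * S2.det ^ (-(1 : ℝ) / 2) *
            Real.exp (-(dotProduct x (S2⁻¹.mulVec x)) / 2)) /
          ((2 * Real.pi) ^ (-(p : ℝ) / 2) * S0.det ^ (-(1 : ℝ) / 2) *
            Real.exp (-(dotProduct x (S0⁻¹.mulVec x)) / 2)))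
      = C * ∫ x : Fin p → ℝ, Real.exp (-(x ⬝ᵥ A *ᵥ x) / 2) := by
    rw [← MeasureTheory.integral_const_mul]
    congr 1
    funext x
    exact hpoint x
  rw [hstep, gaussInt hA]
  -- determinant identity
  have hu0 : IsUnit S0.det := hd0.ne'.isUnit
  have hu1 : IsUnit S1.det := hd1.ne'.isUnit
  have hu2 : IsUnit S2.det := hd2.ne'.isUnit
  have hdetM : (1 - S0⁻¹ * (S1 - S0) * S0⁻¹ * (S2 - S0)).det
      = S0.det⁻¹ * (S1.det * (A.det * S2.det)) := by
    rw [keyId S0 S1 S2 hu0 hu1 hu2, ← hAdef, Matrix.det_mul, Matrix.det_mul, Matrix.det_mul,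
      Matrix.det_nonsing_inv, Ring.inverse_eq_inv']
    ring
  rw [hdetM, hCdef]
  -- final arithmetic
  have hs : ∀ d : ℝ, 0 < d → d ^ (-(1:ℝ)/2) = (Real.sqrt d)⁻¹ := by
    intro d hd
    rw [Real.sqrt_eq_rpow, ← Real.rpow_neg hd.le]
    norm_num
  have hπp : (2 * π) ^ (-(p : ℝ) / 2) = (Real.sqrt (2 * π) ^ p)⁻¹ := by
    rw [Real.sqrt_eq_rpow, ← Real.rpow_natCast ((2*π) ^ ((1:ℝ)/2)) p, ← Real.rpow_mul h2π.le,
      ← Real.rpow_neg h2π.le]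
    rw [show -(p:ℝ)/2 = -(1/2 * (p:ℝ)) by ring]
  have hdM : (0:ℝ) < S0.det⁻¹ * (S1.det * (A.det * S2.det)) := by positivity
  rw [hs S1.det hd1, hs S2.det hd2, hs S0.det hd0, hs _ hdM, hπp]
  rw [Real.sqrt_mul (by positivity : (0:ℝ) ≤ S0.det⁻¹), Real.sqrt_mul hd1.le,
    Real.sqrt_mul hdA.le, Real.sqrt_inv]
  have s0 : 0 < Real.sqrt S0.det := Real.sqrt_pos.mpr hd0
  have s1 : 0 < Real.sqrt S1.det := Real.sqrt_pos.mpr hd1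
  have s2 : 0 < Real.sqrt S2.det := Real.sqrt_pos.mpr hd2
  have sA : 0 < Real.sqrt A.det := Real.sqrt_pos.mpr hdA
  have sπ : 0 < Real.sqrt (2*π) ^ p := by positivity
  field_simp
end

section
/- Let a be a real number with 0 < 2(s-1)a² < 1 and let H be a p×p symmetric matrix whose only nonzero entries are s-1 entries equal to 1 in the first row (in positions 3 through p), the same s-1 positions of the second row, and their symmetric counterparts. Then the largest and smallest eigenvalues of (I + aH)^{-1} are (1 + sqrt(2(s-1)a²))/(1 - 2(s-1)a²) and (1 - sqrt(2(s-1)a²))/(1 - 2(s-1)a²), respectively, and all remaining eigenvalues equal 1. -/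
open Matrix Module.End Finset

lemma mem_spec' {n : Type*} [Fintype n] [DecidableEq n] (A : Matrix n n ℝ) (μ : ℝ) :
    μ ∈ spectrum ℝ A ↔ ∃ v, v ≠ 0 ∧ A *ᵥ v = μ • v := by
  rw [← AlgEquiv.spectrum_eq (Matrix.toLinAlgEquiv' : Matrix n n ℝ ≃ₐ[ℝ] _),
    ← Module.End.hasEigenvalue_iff_mem_spectrum]
  constructor
  · intro h
    obtain ⟨v, hv⟩ := h.exists_hasEigenvector
    exact ⟨v, hv.2, by simpa [Matrix.toLinAlgEquiv'_apply, Matrix.toLin'_apply] using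
      hv.apply_eq_smul⟩
  · rintro ⟨v, hv0, hv⟩
    exact hasEigenvalue_of_hasEigenvector ⟨mem_eigenspace_iff.mpr
      (by simpa [Matrix.toLinAlgEquiv'_apply, Matrix.toLin'_apply] using hv), hv0⟩

lemma inv_eig {n : Type*} [Fintype n] [DecidableEq n] {M : Matrix n n ℝ}
    (hM : IsUnit M.det) {v : n → ℝ} {c : ℝ} (hc : c ≠ 0) (hv : M *ᵥ v = c • v) :
    M⁻¹ *ᵥ v = c⁻¹ • v := by
  have h1 : M⁻¹ *ᵥ (M *ᵥ v) = v := by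
    rw [Matrix.mulVec_mulVec, Matrix.nonsing_inv_mul M hM, Matrix.one_mulVec]
  rw [hv, Matrix.mulVec_smul] at h1
  have h2 := congrArg (fun z => c⁻¹ • z) h1
  simpa [smul_smul, inv_mul_cancel₀ hc] using h2

set_option maxHeartbeats 1600000 in
/-- Eigenvalues of `(I + aH)⁻¹` where `H` is the symmetric 0/1 matrix supported on the first two
rows/columns with `s-1` ones each (in common positions among indices `≥ 2`): the spectrum consists
of `(1 ± √(2(s-1)a²))/(1 - 2(s-1)a²)` together with `1`. -/
theorem stmt_10 {p : ℕ} [NeZero p] (hp : 3 ≤ p) (s : ℕ) (a : ℝ)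
    (S : Finset (Fin p)) (hS0 : (0 : Fin p) ∉ S) (hS1 : (1 : Fin p) ∉ S)
    (hScard : S.card = s - 1)
    (H : Matrix (Fin p) (Fin p) ℝ)
    (hH : ∀ i j, H i j =
      if ((i = 0 ∨ i = 1) ∧ j ∈ S) ∨ ((j = 0 ∨ j = 1) ∧ i ∈ S) then 1 else 0)
    (hpd : (1 + a • H).PosDef)
    (hlow : 0 < 2 * ((s : ℝ) - 1) * a ^ 2) (hup : 2 * ((s : ℝ) - 1) * a ^ 2 < 1) :
    spectrum ℝ ((1 + a • H)⁻¹) =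
      {(1 + Real.sqrt (2 * ((s : ℝ) - 1) * a ^ 2)) / (1 - 2 * ((s : ℝ) - 1) * a ^ 2),
       (1 - Real.sqrt (2 * ((s : ℝ) - 1) * a ^ 2)) / (1 - 2 * ((s : ℝ) - 1) * a ^ 2),
       1} := by
  set t : ℝ := 2 * ((s : ℝ) - 1) * a ^ 2 with ht
  set r : ℝ := Real.sqrt t with hr
  set M : Matrix (Fin p) (Fin p) ℝ := 1 + a • H with hM
  -- basic numeric facts
  have hlow' : 0 < 2 * ((s : ℝ) - 1) * a ^ 2 := by rw [← ht]; exact hlow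
  have hup' : 2 * ((s : ℝ) - 1) * a ^ 2 < 1 := by rw [← ht]; exact hup
  have ha : a ≠ 0 := by
    intro h; rw [h] at hlow'; simp at hlow'
  have hs1 : (0:ℝ) < (s:ℝ) - 1 := by nlinarith [sq_nonneg a]
  have hs2 : 1 ≤ s := by
    by_contra h
    push_neg at h
    interval_cases s <;> norm_num at hs1
  have hcard : ((S.card : ℝ)) = (s:ℝ) - 1 := by
    rw [hScard]
    have : 1 < (s:ℝ) := by linarith
    have hs2' : 1 ≤ s := hs2
    push_cast [Nat.cast_sub hs2']
    ring
  have hr2 : r ^ 2 = t := Real.sq_sqrt hlow.le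
  have hr0 : 0 < r := Real.sqrt_pos.mpr hlow
  have hr1 : r < 1 := by nlinarith
  have h1t : (1:ℝ) - t ≠ 0 := by linarith
  have h01 : (0 : Fin p) ≠ 1 := by
    intro h
    have := congrArg Fin.val h
    rw [Fin.val_zero, Fin.val_one', Nat.mod_eq_of_lt (by omega)] at this
    exact absurd this (by norm_num)
  have hdet : IsUnit M.det := (Matrix.isUnit_iff_isUnit_det M).mp hpd.isUnit
  -- row formulas
  have hSne : ∀ i ∈ S, i ≠ 0 ∧ i ≠ 1 := fun i hi =>
    ⟨fun h => hS0 (h ▸ hi), fun h => hS1 (h ▸ hi)⟩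
  have hrow01 : ∀ i, (i = 0 ∨ i = 1) → ∀ j, H i j = if j ∈ S then (1:ℝ) else 0 := by
    intro i hi j
    rw [hH]
    by_cases hj : j ∈ S
    · simp [hi, hj]
    · have hj' := hSne
      simp only [hj, and_false, false_or, and_true, if_neg, iff_false]
      have : ¬ ((j = 0 ∨ j = 1) ∧ i ∈ S) := by
        rintro ⟨-, hiS⟩
        rcases hi with rfl | rfl
        exacts [hS0 hiS, hS1 hiS]
      simp [hj, this]
  have hrowS : ∀ i ∈ S, ∀ j, H i j = if j = 0 ∨ j = 1 then (1:ℝ) else 0 := by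
    intro i hi j
    rw [hH]
    have hi' := hSne i hi
    by_cases hj : j = 0 ∨ j = 1
    · simp [hj, hi]
    · simp [hj, hi'.1, hi'.2]
  have hrowO : ∀ i, i ≠ 0 → i ≠ 1 → i ∉ S → ∀ j, H i j = 0 := by
    intro i h0 h1 hiS j
    rw [hH]
    simp [h0, h1, hiS]
  -- mulVec formulas
  have sum01 : ∀ i, (i = 0 ∨ i = 1) → ∀ v : Fin p → ℝ, (H *ᵥ v) i = ∑ j ∈ S, v j := by
    intro i hi v
    simp only [Matrix.mulVec, dotProduct]
    rw [Finset.sum_congr rfl (fun j _ => by rw [hrow01 i hi j])]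
    simp only [ite_mul, one_mul, zero_mul]
    rw [Finset.sum_ite_mem, Finset.univ_inter]
  have sumS : ∀ i ∈ S, ∀ v : Fin p → ℝ, (H *ᵥ v) i = v 0 + v 1 := by
    intro i hi v
    simp only [Matrix.mulVec, dotProduct]
    rw [Finset.sum_congr rfl (fun j _ => by rw [hrowS i hi j])]
    simp only [ite_mul, one_mul, zero_mul]
    have : ∀ j : Fin p, (if j = 0 ∨ j = 1 then v j else 0) =
        (if j ∈ ({0, 1} : Finset (Fin p)) then v j else 0) := by
      intro j; simp [Finset.mem_insert]
    rw [Finset.sum_congr rfl (fun j _ => this j), Finset.sum_ite_mem, Finset.univ_inter,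
      Finset.sum_pair h01]
  have sumO : ∀ i, i ≠ 0 → i ≠ 1 → i ∉ S → ∀ v : Fin p → ℝ, (H *ᵥ v) i = 0 := by
    intro i h0 h1 hiS v
    simp only [Matrix.mulVec, dotProduct]
    rw [Finset.sum_congr rfl (fun j _ => by rw [hrowO i h0 h1 hiS j])]
    simp
  -- eigenvalues of H are 0 or ±√(2(s-1))
  have eigH : ∀ (ν : ℝ) (v : Fin p → ℝ), v ≠ 0 → H *ᵥ v = ν • v →
      ν = 0 ∨ ν ^ 2 = 2 * ((s:ℝ) - 1) := by
    intro ν v hv0 hv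
    by_cases hν : ν = 0
    · exact Or.inl hν
    right
    set σ : ℝ := ∑ j ∈ S, v j with hσdef
    have e0 : ν * v 0 = σ := by
      have := congrFun hv 0
      rw [sum01 0 (Or.inl rfl) v] at this
      simpa [eq_comm] using this.symm
    have e1 : ν * v 1 = σ := by
      have := congrFun hv 1
      rw [sum01 1 (Or.inr rfl) v] at this
      simpa [eq_comm] using this.symm
    have eS : ∀ j ∈ S, ν * v j = v 0 + v 1 := by
      intro j hj
      have := congrFun hv j
      rw [sumS j hj v] at this
      simpa [eq_comm] using this.symm
    have eO : ∀ k, k ≠ 0 → k ≠ 1 → k ∉ S → v k = 0 := by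
      intro k h0 h1 hkS
      have := congrFun hv k
      rw [sumO k h0 h1 hkS v] at this
      have : ν * v k = 0 := by simpa [eq_comm] using this.symm
      exact (mul_eq_zero.mp this).resolve_left hν
    have hσ : σ ≠ 0 := by
      intro h
      apply hv0
      funext k
      by_cases hk0 : k = 0
      · subst hk0
        have : ν * v 0 = 0 := by rw [e0, h]
        simpa using (mul_eq_zero.mp this).resolve_left hν
      by_cases hk1 : k = 1
      · subst hk1
        have : ν * v 1 = 0 := by rw [e1, h]
        simpa using (mul_eq_zero.mp this).resolve_left hν
      by_cases hkS : k ∈ S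
      · have hv00 : v 0 = 0 := by
          have : ν * v 0 = 0 := by rw [e0, h]
          exact (mul_eq_zero.mp this).resolve_left hν
        have hv11 : v 1 = 0 := by
          have : ν * v 1 = 0 := by rw [e1, h]
          exact (mul_eq_zero.mp this).resolve_left hν
        have : ν * v k = 0 := by rw [eS k hkS, hv00, hv11]; ring
        simpa using (mul_eq_zero.mp this).resolve_left hν
      · simpa using eO k hk0 hk1 hkS
    have key : ν ^ 2 * σ = 2 * ((s:ℝ) - 1) * σ := by
      calc ν ^ 2 * σ = ∑ j ∈ S, ν * (ν * v j) := by
            rw [hσdef, Finset.mul_sum]; exact Finset.sum_congr rfl fun j _ => by ring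
        _ = ∑ j ∈ S, ν * (v 0 + v 1) :=
            Finset.sum_congr rfl fun j hj => by rw [eS j hj]
        _ = (S.card : ℝ) * (ν * (v 0 + v 1)) := by
            rw [Finset.sum_const, nsmul_eq_mul]
        _ = ((s:ℝ) - 1) * ((ν * v 0) + (ν * v 1)) := by rw [hcard]; ring
        _ = 2 * ((s:ℝ) - 1) * σ := by rw [e0, e1]; ring
    exact mul_right_cancel₀ hσ key
  -- eigenvectors of M for eigenvalue 1 ± r
  have eigvec : ∀ μ : ℝ, μ ^ 2 = t → μ ≠ 0 →
      ∃ v : Fin p → ℝ, v ≠ 0 ∧ M *ᵥ v = (1 + μ) • v := by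
    intro μ hμ2 hμ0
    refine ⟨fun j => if j = 0 ∨ j = 1 then μ else if j ∈ S then 2 * a else 0, ?_, ?_⟩
    · intro h
      have := congrFun h 0
      simp at this
      exact hμ0 this
    · set v : Fin p → ℝ := fun j => if j = 0 ∨ j = 1 then μ else if j ∈ S then 2 * a else 0
        with hv
      have hvS : ∀ j ∈ S, v j = 2 * a := by
        intro j hj
        have := hSne j hj
        simp [hv, this.1, this.2, hj]
      have hsum : ∑ j ∈ S, v j = ((s:ℝ) - 1) * (2 * a) := by
        rw [Finset.sum_congr rfl hvS, Finset.sum_const, nsmul_eq_mul, hcard]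
      have hv0 : v 0 = μ := by simp [hv]
      have hv1 : v 1 = μ := by simp [hv]
      rw [hM, Matrix.add_mulVec, Matrix.one_mulVec, Matrix.smul_mulVec]
      funext i
      by_cases hi : i = 0 ∨ i = 1
      · have hHv : (H *ᵥ v) i = ((s:ℝ) - 1) * (2 * a) := by rw [sum01 i hi v, hsum]
        have hvi : v i = μ := by rcases hi with rfl | rfl; exacts [hv0, hv1]
        simp only [Pi.add_apply, Pi.smul_apply, smul_eq_mul, hHv, hvi]
        nlinarith [hμ2]
      · push_neg at hi
        by_cases hiS : i ∈ S
        · have hHv : (H *ᵥ v) i = v 0 + v 1 := sumS i hiS v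
          have hvi : v i = 2 * a := hvS i hiS
          simp only [Pi.add_apply, Pi.smul_apply, smul_eq_mul, hHv, hvi, hv0, hv1]
          ring
        · have hHv : (H *ᵥ v) i = 0 := sumO i hi.1 hi.2 hiS v
          have hvi : v i = 0 := by simp [hv, hi.1, hi.2, hiS]
          simp [hHv, hvi]
  -- the two nontrivial inverse eigenvalues
  have hA : ((1:ℝ) + r) / (1 - t) = ((1:ℝ) - r)⁻¹ := by
    refine eq_inv_of_mul_eq_one_left ?_
    field_simp
    nlinarith [hr2]
  have hB : ((1:ℝ) - r) / (1 - t) = ((1:ℝ) + r)⁻¹ := by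
    refine eq_inv_of_mul_eq_one_left ?_
    field_simp
    nlinarith [hr2]
  ext lam
  simp only [Set.mem_insert_iff, Set.mem_singleton_iff]
  rw [mem_spec']
  constructor
  · rintro ⟨w, hw0, hw⟩
    -- lam ≠ 0 and M *ᵥ w = lam⁻¹ • w
    have hMw : M *ᵥ (M⁻¹ *ᵥ w) = w := by
      rw [Matrix.mulVec_mulVec, Matrix.mul_nonsing_inv M hdet, Matrix.one_mulVec]
    rw [hw, Matrix.mulVec_smul] at hMw
    have hlam : lam ≠ 0 := by
      intro h; rw [h, zero_smul] at hMw; exact hw0 hMw.symm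
    have hMweq : M *ᵥ w = lam⁻¹ • w := by
      have h2 := congrArg (fun z => lam⁻¹ • z) hMw
      simpa [smul_smul, inv_mul_cancel₀ hlam] using h2
    -- extract H eigenvalue
    have hHw : H *ᵥ w = ((lam⁻¹ - 1) / a) • w := by
      rw [hM, Matrix.add_mulVec, Matrix.one_mulVec, Matrix.smul_mulVec] at hMweq
      have : a • (H *ᵥ w) = (lam⁻¹ - 1) • w := by
        rw [sub_smul, one_smul, ← hMweq]; abel
      have := congrArg (fun z => a⁻¹ • z) this
      simp only [smul_smul, inv_mul_cancel₀ ha, one_smul] at this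
      rw [this]
      congr 1
      rw [div_eq_inv_mul]
    rcases eigH _ w hw0 hHw with hν | hν
    · right; right
      have hz : lam⁻¹ - 1 = 0 := (div_eq_zero_iff.mp hν).resolve_right ha
      have : lam⁻¹ = 1 := by linarith
      exact inv_eq_one.mp this
    · have haν : (a * ((lam⁻¹ - 1) / a)) ^ 2 = r ^ 2 := by
        rw [hr2, ht]
        rw [mul_pow]
        rw [hν]
        ring
      have haν' : a * ((lam⁻¹ - 1) / a) = lam⁻¹ - 1 := by
        rw [mul_comm, div_mul_cancel₀ _ ha]
      rw [haν'] at haν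
      have hcases : lam⁻¹ - 1 = r ∨ lam⁻¹ - 1 = -r := sq_eq_sq_iff_eq_or_eq_neg.mp haν
      rcases hcases with h | h
      · -- lam⁻¹ = 1 + r, lam = (1-r)/(1-t)
        right; left
        have hinv : lam⁻¹ = 1 + r := by linarith
        have : lam * (1 + r) = 1 := by rw [← hinv, mul_inv_cancel₀ hlam]
        rw [hB]
        exact eq_inv_of_mul_eq_one_left this
      · left
        have hinv : lam⁻¹ = 1 - r := by linarith
        have : lam * (1 - r) = 1 := by rw [← hinv, mul_inv_cancel₀ hlam]
        rw [hA]
        exact eq_inv_of_mul_eq_one_left this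
  · intro hlam
    rcases hlam with h | h | h
    · -- (1+r)/(1-t) = (1-r)⁻¹ ; eigenvector with μ = -r
      obtain ⟨v, hv0, hv⟩ := eigvec (-r) (by rw [neg_sq]; exact hr2) (neg_ne_zero.mpr hr0.ne')
      refine ⟨v, hv0, ?_⟩
      have hv' : M *ᵥ v = (1 - r) • v := by
        rw [hv, show (1:ℝ) + -r = 1 - r from by ring]
      rw [h, hA]
      exact inv_eig hdet (by linarith) hv'
    · obtain ⟨v, hv0, hv⟩ := eigvec r hr2 hr0.ne'
      refine ⟨v, hv0, ?_⟩
      rw [h, hB]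
      exact inv_eig hdet (ne_of_gt (by linarith : (0:ℝ) < 1 + r)) hv
    · -- eigenvalue 1: eigenvector e0 - e1
      set v : Fin p → ℝ := fun j => if j = 0 then 1 else if j = 1 then -1 else 0 with hv
      have hv0 : v ≠ 0 := by
        intro hz
        have := congrFun hz 0
        simp [hv] at this
      have hHv : H *ᵥ v = 0 := by
        funext i
        have hsum : (H *ᵥ v) i = H i 0 - H i 1 := by
          simp only [Matrix.mulVec, dotProduct]
          rw [← Finset.sum_subset (Finset.subset_univ ({0, 1} : Finset (Fin p)))
            (fun x _ hx => ?_)]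
          · rw [Finset.sum_pair h01]
            simp [hv, h01.symm]
            ring
          · simp only [Finset.mem_insert, Finset.mem_singleton, not_or] at hx
            simp [hv, hx.1, hx.2]
        have hcol : ∀ i, H i 0 = H i 1 := by
          intro i
          rw [hH, hH]
          have : ¬ ((0:Fin p) = 0 ∨ (0:Fin p) = 1) ∧ True ∨ True := Or.inr trivial
          by_cases hiS : i ∈ S
          · simp [hiS]
          · simp [hiS, hS0, hS1]
        rw [hsum, hcol]
        simp
      have hMv : M *ᵥ v = (1:ℝ) • v := by
        rw [hM, Matrix.add_mulVec, Matrix.one_mulVec, Matrix.smul_mulVec, hHv]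
        simp
      refine ⟨v, hv0, ?_⟩
      rw [h]
      simpa using inv_eig hdet one_ne_zero hMv
end

section
/- Let T ⊂ [p], ξ ≥ 1, and define Ψ(ξ,T) and the group s-sparse set 𝕂(s) = {u ∈ ℝ^{pk} : at most s groups u_{(l)} are nonzero}, where vectors in ℝ^{pk} are partitioned into p groups of size k. If |T| ≤ s, then Ψ(ξ,T) ∩ B_2(1) ⊆ cl(conv(𝕂(s) ∩ B_2(2+ξ))), where B_2(r) is the Euclidean ball of radius r and cl(conv(·)) denotes the closed convex hull. -/
open Finset

noncomputable def stmt15res {p k : ℕ} (u : PiLp 2 (fun _ : Fin p => EuclideanSpace ℝ (Fin k)))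
    (S : Finset (Fin p)) : PiLp 2 (fun _ : Fin p => EuclideanSpace ℝ (Fin k)) :=
  WithLp.toLp 2 fun j => if j ∈ S then u j else 0

lemma stmt15res_norm_sq {p k : ℕ} (u : PiLp 2 (fun _ : Fin p => EuclideanSpace ℝ (Fin k)))
    (S : Finset (Fin p)) : ‖stmt15res u S‖ ^ 2 = ∑ j ∈ S, ‖u j‖ ^ 2 := by
  rw [PiLp.norm_sq_eq_of_L2]
  have h : ∀ i : Fin p, ‖stmt15res u S i‖ ^ 2 = if i ∈ S then ‖u i‖ ^ 2 else 0 := by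
    intro i; by_cases h : i ∈ S <;> simp [stmt15res, h]
  simp only [h, Finset.sum_ite_mem, Finset.univ_inter]

set_option maxHeartbeats 1000000 in
/-- The cone `Ψ(ξ,T)` intersected with the unit Euclidean ball is contained in the closed
convex hull of the group `s`-sparse vectors of norm at most `2 + ξ`. -/
theorem stmt_15 {p k : ℕ} (s : ℕ) (T : Finset (Fin p)) (hT : T.card ≤ s)
    (ξ : ℝ) (hξ : 1 ≤ ξ) :
    {u : PiLp 2 (fun _ : Fin p => EuclideanSpace ℝ (Fin k)) |
        (∑ j ∈ Tᶜ, ‖u j‖) ≤ ξ * ∑ j ∈ T, ‖u j‖} ∩ Metric.closedBall 0 1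
      ⊆ closure (convexHull ℝ
          ({u : PiLp 2 (fun _ : Fin p => EuclideanSpace ℝ (Fin k)) |
              ({l | u l ≠ 0} : Set (Fin p)).ncard ≤ s} ∩ Metric.closedBall 0 (2 + ξ))) := by
  rintro u ⟨hu1, hu2⟩
  simp only [Set.mem_setOf_eq] at hu1
  rw [Metric.mem_closedBall, dist_zero_right] at hu2
  have hξ0 : (0:ℝ) ≤ 2 + ξ := by linarith
  -- the case u = 0 : direct membership
  by_cases hu0 : u = 0
  · apply subset_closure
    apply subset_convexHull
    refine ⟨?_, ?_⟩
    · simp [hu0, Set.ncard_empty]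
    · simp [hu0, Metric.mem_closedBall, hξ0]
  -- now u ≠ 0 ; in particular s ≥ 1
  have hs : 0 < s := by
    rcases Nat.eq_zero_or_pos s with h0 | h; swap; · exact h
    exfalso
    have hT0 : T = ∅ := Finset.card_eq_zero.mp (le_antisymm (h0 ▸ hT) (Nat.zero_le _))
    have hz : (∑ j : Fin p, ‖u j‖) ≤ 0 := by
      simpa [hT0] using hu1
    apply hu0
    apply PiLp.ext; intro j
    have := (Finset.sum_eq_zero_iff_of_nonneg (fun j _ => norm_nonneg (u j))).mp
      (le_antisymm hz (Finset.sum_nonneg fun j _ => norm_nonneg (u j))) j (mem_univ j)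
    simpa using this
  classical
  set σ : Equiv.Perm (Fin p) := Tuple.sort (fun j : Fin p => -‖u j‖) with hσ
  have hanti : ∀ r₁ r₂ : Fin p, r₁ ≤ r₂ → ‖u (σ r₂)‖ ≤ ‖u (σ r₁)‖ := by
    intro r₁ r₂ h
    have := Tuple.monotone_sort (fun j : Fin p => -‖u j‖) h
    simpa [hσ] using this
  set B : ℕ → Finset (Fin p) := fun i => univ.filter (fun j => (σ.symm j : ℕ) / s = i) with hB
  set w : ℕ → PiLp 2 (fun _ : Fin p => EuclideanSpace ℝ (Fin k)) := fun i => stmt15res u (B i)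
    with hw
  have hmemB : ∀ i (j : Fin p), j ∈ B i ↔ (σ.symm j : ℕ) / s = i := by
    intro i j; simp [hB]
  have hsum : ∑ i ∈ range p, w i = u := by
    apply PiLp.ext; intro j
    have happ : (∑ i ∈ range p, w i) j = ∑ i ∈ range p, w i j := by
      rw [WithLp.ofLp_sum]; exact Finset.sum_apply j (range p) (fun i => (w i).ofLp)
    rw [happ]
    have h1 : ∀ i, w i j = if (σ.symm j : ℕ) / s = i then u j else 0 := by
      intro i
      simp only [hw, stmt15res, hmemB, PiLp.toLp_apply]
    simp only [h1]
    rw [Finset.sum_ite_eq (range p) ((σ.symm j : ℕ) / s) (fun _ => u j)]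
    have : (σ.symm j : ℕ) / s ∈ range p := by
      rw [Finset.mem_range]
      exact lt_of_le_of_lt (Nat.div_le_self _ _) (σ.symm j).isLt
    simp [this]
  have hdivlb : ∀ i (j : Fin p), (σ.symm j : ℕ) / s = i → i * s ≤ (σ.symm j : ℕ) := by
    intro i j h
    calc i * s = (σ.symm j : ℕ) / s * s := by rw [h]
    _ ≤ _ := Nat.div_mul_le_self _ _
  have hdivub : ∀ i (j : Fin p), (σ.symm j : ℕ) / s = i → (σ.symm j : ℕ) < (i + 1) * s := by
    intro i j h
    rw [← Nat.div_lt_iff_lt_mul hs, h]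
    omega
  have hcard : ∀ i, (B i).card ≤ s := by
    intro i
    have := Finset.card_le_card_of_injOn (fun j => (σ.symm j : ℕ) - i * s)
      (s := B i) (t := Finset.range s) ?_ ?_
    · simpa using this
    · intro j hj
      rw [Finset.mem_coe, hmemB] at hj
      have h1 := hdivlb i j hj
      have h2 : (σ.symm j : ℕ) < i * s + s := by
        have := hdivub i j hj; nlinarith
      rw [Finset.mem_coe, Finset.mem_range]
      simp only
      omega
    · intro j1 h1 j2 h2 heq
      simp only [Finset.mem_coe, hmemB] at h1 h2
      have b1 := hdivlb i j1 h1
      have b2 := hdivlb i j2 h2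
      have : (σ.symm j1 : ℕ) = (σ.symm j2 : ℕ) := by
        simp only at heq; omega
      exact σ.symm.injective (Fin.ext this)
  have hfull : ∀ i, (i+1)*s ≤ p → s ≤ (B i).card := by
    intro i hip
    have hp : 0 < p := lt_of_lt_of_le (by nlinarith [hs]) hip
    have := Finset.card_le_card_of_injOn
      (fun m => σ ⟨(i * s + m) % p, Nat.mod_lt _ hp⟩)
      (s := Finset.range s) (t := B i) ?_ ?_
    · simpa using this
    · intro m hm
      rw [Finset.mem_coe, Finset.mem_range] at hm
      have hlt : i * s + m < p := by nlinarith
      rw [Finset.mem_coe, hmemB]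
      have he : σ.symm (σ ⟨(i * s + m) % p, Nat.mod_lt _ hp⟩)
          = ⟨(i * s + m) % p, Nat.mod_lt _ hp⟩ := σ.symm_apply_apply _
      rw [he]
      simp only [Nat.mod_eq_of_lt hlt]
      have : i * s + m = m + i * s := by ring
      rw [this, Nat.add_mul_div_right _ _ hs, Nat.div_eq_of_lt hm]
      omega
    · intro m1 hm1 m2 hm2 heq
      simp only [Finset.mem_coe, Finset.mem_range] at hm1 hm2
      simp only at heq
      have e := σ.injective heq
      have hv : (i * s + m1) % p = (i * s + m2) % p := congrArg Fin.val e
      have l1 : i * s + m1 < p := by nlinarith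
      have l2 : i * s + m2 < p := by nlinarith
      rw [Nat.mod_eq_of_lt l1, Nat.mod_eq_of_lt l2] at hv
      omega
  have hw0 : ‖w 0‖ ≤ 1 := by
    have h1 : ‖w 0‖ ^ 2 ≤ ‖u‖ ^ 2 := by
      rw [hw]
      simp only
      rw [stmt15res_norm_sq, PiLp.norm_sq_eq_of_L2]
      exact Finset.sum_le_sum_of_subset_of_nonneg (Finset.subset_univ _)
        (fun j _ _ => by positivity)
    calc ‖w 0‖ = Real.sqrt (‖w 0‖ ^ 2) := (Real.sqrt_sq (norm_nonneg _)).symm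
    _ ≤ Real.sqrt (‖u‖ ^ 2) := Real.sqrt_le_sqrt h1
    _ = ‖u‖ := Real.sqrt_sq (norm_nonneg _)
    _ ≤ 1 := hu2
  have hnormres : ∀ i, ‖w i‖ ^ 2 = ∑ j ∈ B i, ‖u j‖ ^ 2 := by
    intro i; rw [hw]; simp only; rw [stmt15res_norm_sq]
  have hkey : ∀ i, 1 ≤ i → Real.sqrt s * ‖w i‖ ≤ ∑ j ∈ B (i-1), ‖u j‖ := by
    intro i hi
    rcases Finset.eq_empty_or_nonempty (B i) with hBe | ⟨j₀, hj₀⟩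
    · have : ‖w i‖ = 0 := by
        rw [← Real.sqrt_sq (norm_nonneg _), hnormres, hBe]
        simp
      rw [this, mul_zero]
      exact Finset.sum_nonneg fun j _ => norm_nonneg _
    · rw [hmemB] at hj₀
      have hisp : i * s < p := lt_of_le_of_lt (hdivlb i j₀ hj₀) (σ.symm j₀).isLt
      set r₀ : Fin p := ⟨i * s, hisp⟩ with hr₀
      set m := ‖u (σ r₀)‖ with hm0
      have hm0n : 0 ≤ m := norm_nonneg _
      -- each group in block i has norm ≤ m
      have hub : ∀ j ∈ B i, ‖u j‖ ≤ m := by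
        intro j hj
        rw [hmemB] at hj
        have hle : r₀ ≤ σ.symm j := by
          rw [Fin.le_def]
          exact hdivlb i j hj
        have := hanti r₀ (σ.symm j) hle
        rwa [σ.apply_symm_apply] at this
      -- each group in block i-1 has norm ≥ m
      have hlb : ∀ j ∈ B (i-1), m ≤ ‖u j‖ := by
        intro j hj
        rw [hmemB] at hj
        have hle : σ.symm j ≤ r₀ := by
          have h2 := hdivub (i-1) j hj
          rw [show (i - 1 + 1) = i from by omega] at h2
          rw [Fin.le_def]
          show (σ.symm j : ℕ) ≤ i * s
          omega
        have := hanti (σ.symm j) r₀ hle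
        rwa [σ.apply_symm_apply] at this
      -- step2 : ‖w i‖ ≤ √s * m
      have step2 : ‖w i‖ ≤ Real.sqrt s * m := by
        have h1 : ‖w i‖ ^ 2 ≤ s * m ^ 2 := by
          rw [hnormres]
          calc ∑ j ∈ B i, ‖u j‖ ^ 2 ≤ (B i).card • (m ^ 2) :=
                Finset.sum_le_card_nsmul _ _ _ (fun j hj => by
                  have := hub j hj
                  have := norm_nonneg (u j)
                  nlinarith)
          _ = ((B i).card : ℝ) * m ^ 2 := by rw [nsmul_eq_mul]
          _ ≤ s * m ^ 2 := by
                have : ((B i).card : ℝ) ≤ (s : ℝ) := Nat.cast_le.mpr (hcard i)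
                nlinarith
        calc ‖w i‖ = Real.sqrt (‖w i‖ ^ 2) := (Real.sqrt_sq (norm_nonneg _)).symm
        _ ≤ Real.sqrt (s * m ^ 2) := Real.sqrt_le_sqrt h1
        _ = Real.sqrt s * m := by
              rw [Real.sqrt_mul (Nat.cast_nonneg s), Real.sqrt_sq hm0n]
      -- step3 : s * m ≤ ∑_{B(i-1)} ‖u j‖
      have step3 : (s : ℝ) * m ≤ ∑ j ∈ B (i-1), ‖u j‖ := by
        have hc : s ≤ (B (i-1)).card := by
          apply hfull
          have : (i - 1 + 1) = i := by omega
          rw [this]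
          omega
        calc (s : ℝ) * m ≤ ((B (i-1)).card : ℝ) * m := by
              have : (s : ℝ) ≤ ((B (i-1)).card : ℝ) := Nat.cast_le.mpr hc
              nlinarith
        _ = (B (i-1)).card • m := (nsmul_eq_mul _ _).symm
        _ ≤ _ := Finset.card_nsmul_le_sum _ _ _ hlb
      calc Real.sqrt s * ‖w i‖ ≤ Real.sqrt s * (Real.sqrt s * m) := by
            have := Real.sqrt_nonneg (s : ℝ)
            nlinarith
      _ = (s : ℝ) * m := by
            rw [← mul_assoc, Real.mul_self_sqrt (Nat.cast_nonneg s)]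
      _ ≤ _ := step3
  have hpart : ∑ i ∈ range p, ∑ j ∈ B i, ‖u j‖ = ∑ j : Fin p, ‖u j‖ := by
    have h1 : ∀ i, ∑ j ∈ B i, ‖u j‖ = ∑ j : Fin p, if (σ.symm j : ℕ) / s = i then ‖u j‖ else 0 := by
      intro i
      rw [hB]
      simp only
      rw [Finset.sum_filter]
    simp only [h1]
    rw [Finset.sum_comm]
    apply Finset.sum_congr rfl
    intro j _
    rw [Finset.sum_ite_eq (range p) ((σ.symm j : ℕ) / s) (fun _ => ‖u j‖)]
    have : (σ.symm j : ℕ) / s ∈ range p := by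
      rw [Finset.mem_range]
      exact lt_of_le_of_lt (Nat.div_le_self _ _) (σ.symm j).isLt
    simp [this]
  have hCS : ∑ j ∈ T, ‖u j‖ ≤ Real.sqrt s := by
    have h1 : (∑ j ∈ T, ‖u j‖) ^ 2 ≤ (s : ℝ) := by
      have key := Finset.sum_mul_sq_le_sq_mul_sq T (fun _ => (1:ℝ)) (fun j => ‖u j‖)
      simp only [one_mul, one_pow, Finset.sum_const, nsmul_eq_mul, mul_one] at key
      have h2 : ∑ j ∈ T, ‖u j‖ ^ 2 ≤ ‖u‖ ^ 2 := by
        rw [PiLp.norm_sq_eq_of_L2]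
        exact Finset.sum_le_sum_of_subset_of_nonneg (Finset.subset_univ _)
          (fun j _ _ => by positivity)
      have h3 : ((T.card : ℝ)) ≤ (s : ℝ) := Nat.cast_le.mpr hT
      have h4 : ‖u‖ ^ 2 ≤ 1 := pow_le_one₀ (norm_nonneg u) hu2
      have h5 : (0:ℝ) ≤ ∑ j ∈ T, ‖u j‖ ^ 2 := Finset.sum_nonneg fun j _ => sq_nonneg _
      calc (∑ j ∈ T, ‖u j‖) ^ 2 ≤ (T.card : ℝ) * ∑ j ∈ T, ‖u j‖ ^ 2 := key
      _ ≤ (s : ℝ) * 1 := mul_le_mul h3 (h2.trans h4) h5 (Nat.cast_nonneg s)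
      _ = (s : ℝ) := mul_one _
    calc ∑ j ∈ T, ‖u j‖ = Real.sqrt ((∑ j ∈ T, ‖u j‖) ^ 2) :=
          (Real.sqrt_sq (Finset.sum_nonneg fun j _ => norm_nonneg _)).symm
    _ ≤ Real.sqrt s := Real.sqrt_le_sqrt h1
  set M : ℝ := ∑ i ∈ range p, ‖w i‖ with hM
  have hMle : M ≤ 2 + ξ := by
    have hsq : 0 < Real.sqrt s := Real.sqrt_pos.mpr (by exact_mod_cast hs)
    rcases Nat.eq_zero_or_pos p with hp0 | hp0
    · have hre : (range p : Finset ℕ) = ∅ := by rw [hp0]; rfl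
      rw [hM, hre, Finset.sum_empty]
      linarith
    · have hsplit : M = ‖w 0‖ + ∑ i ∈ Finset.Ico 1 p, ‖w i‖ := by
        rw [hM, Finset.range_eq_Ico, Finset.sum_eq_sum_Ico_succ_bot hp0]
      have htail : Real.sqrt s * ∑ i ∈ Finset.Ico 1 p, ‖w i‖ ≤ ∑ j : Fin p, ‖u j‖ := by
        rw [Finset.mul_sum]
        calc ∑ i ∈ Finset.Ico 1 p, Real.sqrt s * ‖w i‖
            ≤ ∑ i ∈ Finset.Ico 1 p, ∑ j ∈ B (i-1), ‖u j‖ :=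
              Finset.sum_le_sum fun i hi => hkey i (Finset.mem_Ico.mp hi).1
        _ = ∑ i ∈ Finset.Ico 0 (p-1), ∑ j ∈ B i, ‖u j‖ := by
              apply Finset.sum_nbij' (fun i => i - 1) (fun i => i + 1)
              · intro a ha; rw [Finset.mem_Ico] at ha ⊢; omega
              · intro a ha; rw [Finset.mem_Ico] at ha ⊢; omega
              · intro a ha; rw [Finset.mem_Ico] at ha; omega
              · intro a ha; rw [Finset.mem_Ico] at ha; omega
              · intro a ha; rfl
        _ ≤ ∑ i ∈ range p, ∑ j ∈ B i, ‖u j‖ := by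
              apply Finset.sum_le_sum_of_subset_of_nonneg
              · intro a ha; rw [Finset.mem_Ico] at ha; rw [Finset.mem_range]; omega
              · intro a _ _; exact Finset.sum_nonneg fun j _ => norm_nonneg _
        _ = ∑ j : Fin p, ‖u j‖ := hpart
      have htot : ∑ j : Fin p, ‖u j‖ ≤ (1 + ξ) * ∑ j ∈ T, ‖u j‖ := by
        rw [← Finset.sum_add_sum_compl T]
        have := Finset.sum_nonneg (fun j (_ : j ∈ T) => norm_nonneg (u j))
        nlinarith [hu1]
      have hTs : (1 + ξ) * ∑ j ∈ T, ‖u j‖ ≤ (1 + ξ) * Real.sqrt s := by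
        have h1ξ : (0:ℝ) ≤ 1 + ξ := by linarith
        nlinarith [hCS]
      have ht2 : Real.sqrt s * (∑ i ∈ Finset.Ico 1 p, ‖w i‖)
          ≤ Real.sqrt s * (1 + ξ) := by
        calc Real.sqrt s * (∑ i ∈ Finset.Ico 1 p, ‖w i‖) ≤ (1 + ξ) * Real.sqrt s :=
              htail.trans (htot.trans hTs)
        _ = Real.sqrt s * (1 + ξ) := mul_comm _ _
      have htail2 : ∑ i ∈ Finset.Ico 1 p, ‖w i‖ ≤ 1 + ξ :=
        (mul_le_mul_iff_right₀ hsq).mp ht2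
      rw [hsplit]
      linarith
  have hMpos : 0 < M := by
    rcases (Finset.sum_nonneg (fun i (_ : i ∈ range p) => norm_nonneg (w i))).lt_or_eq
      with h | h
    · exact h
    · exfalso
      apply hu0
      rw [← hsum]
      apply Finset.sum_eq_zero
      intro i hi
      exact norm_eq_zero.mp
        ((Finset.sum_eq_zero_iff_of_nonneg (fun i _ => norm_nonneg (w i))).mp h.symm i hi)
  -- final convex combination
  apply subset_closure
  set t : Finset ℕ := (range p).filter (fun i => w i ≠ 0) with ht
  have hsum_t_norm : ∑ i ∈ t, ‖w i‖ = M := by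
    rw [hM, ht]
    exact Finset.sum_filter_of_ne (fun i _ h => norm_ne_zero_iff.mp h)
  have hsum_t : ∑ i ∈ t, w i = u := by
    rw [← hsum, ht]
    exact Finset.sum_filter_of_ne (fun i _ h => h)
  have hmem : ∀ i ∈ t, (M / ‖w i‖) • w i ∈
      ({v : PiLp 2 (fun _ : Fin p => EuclideanSpace ℝ (Fin k)) |
          ({l | v l ≠ 0} : Set (Fin p)).ncard ≤ s} ∩ Metric.closedBall 0 (2 + ξ)) := by
    intro i hi
    rw [ht, Finset.mem_filter] at hi
    obtain ⟨_, hwne⟩ := hi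
    have hwn0 : ‖w i‖ ≠ 0 := norm_ne_zero_iff.mpr hwne
    constructor
    · -- sparsity
      have hsub : {l | ((M / ‖w i‖) • w i) l ≠ 0} ⊆ (B i : Set (Fin p)) := by
        intro l hl
        simp only [Set.mem_setOf_eq] at hl
        have hwl : w i l ≠ 0 := by
          intro h0
          apply hl
          rw [PiLp.smul_apply, h0, smul_zero]
        rw [Finset.mem_coe]
        by_contra hlB
        apply hwl
        have : w i l = if l ∈ B i then u l else 0 := rfl
        rw [this, if_neg hlB]
      refine le_trans (le_trans (Set.ncard_le_ncard hsub (Finset.finite_toSet _)) ?_) (hcard i)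
      rw [Set.ncard_coe_finset]
    · -- norm bound
      rw [Metric.mem_closedBall, dist_zero_right, norm_smul]
      have h1 : ‖M / ‖w i‖‖ = M / ‖w i‖ := by
        rw [Real.norm_eq_abs, abs_of_nonneg (div_nonneg hMpos.le (norm_nonneg _))]
      rw [h1, div_mul_cancel₀ _ hwn0]
      exact hMle
  have hcm := Finset.centerMass_mem_convexHull t (w := fun i => ‖w i‖)
    (fun i _ => norm_nonneg _) (by rw [hsum_t_norm]; exact hMpos)
    (z := fun i => (M / ‖w i‖) • w i) hmem
  have heq : t.centerMass (fun i => ‖w i‖) (fun i => (M / ‖w i‖) • w i) = u := by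
    rw [Finset.centerMass, hsum_t_norm]
    have hinner : ∑ i ∈ t, ‖w i‖ • ((M / ‖w i‖) • w i) = M • ∑ i ∈ t, w i := by
      rw [Finset.smul_sum]
      apply Finset.sum_congr rfl
      intro i hi
      rw [ht, Finset.mem_filter] at hi
      have hwn0 : ‖w i‖ ≠ 0 := norm_ne_zero_iff.mpr hi.2
      rw [smul_smul]
      congr 1
      field_simp
    rw [hinner, hsum_t, inv_smul_smul₀ hMpos.ne' u]
  rw [← heq]
  exact hcm
end
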